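/- arXiv:1706.04305 — 7 statements merged into one kernel-verified Lean document; each statement's English description precedes it below -/
import Mathlib

section
/- Let V be a finite-dimensional real inner product space equipped with an almost contact metric structure (φ, ξ, η), and let W ⊆ V be a subspace with ξ ∈ W. Then W is pointwise slant (i.e., the angle between φX and W is the same for every X ∈ W not proportional to ξ) if and only if there exists θ ∈ [0, π/2] such that P²X = cos²θ · (−X + η(X)ξ) for all X ∈ W; moreover, in that case θ equals the common angle between φX and W for all X ∈ W not proportional to ξ. -/
open RealInnerProductSpace

/-- `W` (a subspace with `ξ ∈ W`) is pointwise slant — i.e. the angle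
between `φX` and `W` (= the angle between `φX` and its orthogonal projection `PX`
onto `W`) is the same for every `X ∈ W` not proportional to `ξ` — if and only if
there is `θ ∈ [0, π/2]` with `P²X = cos²θ • (−X + η(X)ξ)` for all `X ∈ W`;
moreover, any such `θ` equals the common angle between `φX` and `W` for all
`X ∈ W` not proportional to `ξ`. -/
theorem stmt_0 {V : Type*} [NormedAddCommGroup V] [InnerProductSpace ℝ V]
    [FiniteDimensional ℝ V]
    (φ : V →ₗ[ℝ] V) (ξ : V) (η : V → ℝ) (hη : ∀ X, η X = ⟪X, ξ⟫)
    (hξ : ‖ξ‖ = 1) (hφξ : φ ξ = 0)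
    (hφ2 : ∀ X : V, φ (φ X) = -X + η X • ξ)
    (hmetric : ∀ X Y : V, ⟪φ X, φ Y⟫ = ⟪X, Y⟫ - η X * η Y)
    (W : Submodule ℝ V) (hξW : ξ ∈ W)
    (P : V → V) (hP : ∀ X, P X = (W.orthogonalProjectionOnto (φ X) : V)) :
    ((∃ α : ℝ, ∀ X ∈ W, (¬ ∃ c : ℝ, X = c • ξ) →
        InnerProductGeometry.angle (φ X) (P X) = α) ↔
      (∃ θ ∈ Set.Icc (0 : ℝ) (Real.pi / 2),
        ∀ X ∈ W, P (P X) = Real.cos θ ^ 2 • (-X + η X • ξ))) ∧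
    (∀ θ ∈ Set.Icc (0 : ℝ) (Real.pi / 2),
      (∀ X ∈ W, P (P X) = Real.cos θ ^ 2 • (-X + η X • ξ)) →
      ∀ X ∈ W, (¬ ∃ c : ℝ, X = c • ξ) →
        InnerProductGeometry.angle (φ X) (P X) = θ) := by
  have hξξ : ⟪ξ, ξ⟫ = (1 : ℝ) := by
    rw [real_inner_self_eq_norm_sq, hξ]; norm_num
  have hξ0 : ξ ≠ 0 := by
    intro h; rw [h, norm_zero] at hξ; norm_num at hξ
  -- η ∘ φ = 0
  have hηφ : ∀ X, η (φ X) = 0 := by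
    intro X
    have h1 : φ (φ (φ X)) = -φ X + η (φ X) • ξ := hφ2 (φ X)
    have h2 : φ (φ (φ X)) = -φ X := by
      have := congrArg φ (hφ2 X)
      rw [map_add, map_neg, map_smul, hφξ, smul_zero, add_zero] at this
      exact this
    have h3 : η (φ X) • ξ = 0 := by
      have := h2.symm.trans h1
      nth_rewrite 1 [← add_zero (-φ X)] at this
      exact (add_left_cancel this).symm
    rcases smul_eq_zero.mp h3 with h | h
    · exact h
    · exact absurd h hξ0
  have hφXξ : ∀ X, ⟪φ X, ξ⟫ = 0 := fun X => by rw [← hη]; exact hηφ X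
  -- skew-symmetry of φ
  have hskew : ∀ X Y : V, ⟪φ X, Y⟫ = -⟪X, φ Y⟫ := by
    intro X Y
    have h1 := hmetric X (φ Y)
    rw [hηφ, mul_zero, sub_zero, hφ2 Y, inner_add_right, inner_neg_right,
      real_inner_smul_right, hφXξ, mul_zero, add_zero] at h1
    linarith
  -- norm of φ X
  have hnφ : ∀ X : V, ‖φ X‖ ^ 2 = ‖X‖ ^ 2 - η X ^ 2 := by
    intro X
    have := hmetric X X
    rw [real_inner_self_eq_norm_sq, real_inner_self_eq_norm_sq] at this
    nlinarith [this]
  -- P basics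
  have hPW : ∀ X, P X ∈ W := fun X => by rw [hP]; exact (W.orthogonalProjectionOnto (φ X)).2
  have hinner : ∀ X : V, ∀ Y ∈ W, ⟪φ X, Y⟫ = ⟪P X, Y⟫ := by
    intro X Y hY
    have h0 : ⟪φ X - P X, Y⟫ = 0 := by
      rw [hP]; exact W.starProjection_inner_eq_zero (φ X) Y hY
    rw [inner_sub_left] at h0
    linarith
  have hPadd : ∀ X Y : V, P (X + Y) = P X + P Y := by
    intro X Y
    rw [hP, hP, hP, map_add, map_add]
    rfl
  have hηadd : ∀ X Y : V, η (X + Y) = η X + η Y := by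
    intro X Y; rw [hη, hη, hη, inner_add_left]
  -- key inner product identity for P²
  have hPP : ∀ X : V, ∀ Y ∈ W, ⟪P (P X), Y⟫ = -⟪P X, P Y⟫ := by
    intro X Y hY
    rw [← hinner (P X) Y hY, hskew (P X) Y]
    congr 1
    rw [real_inner_comm, hinner Y (P X) (hPW X), real_inner_comm]
  -- φ X = 0 implies X proportional to ξ
  have hφzero : ∀ X : V, φ X = 0 → X = η X • ξ := by
    intro X h0
    have hn : ‖φ X‖ ^ 2 = 0 := by rw [h0, norm_zero]; ring
    have hz : ⟪X - η X • ξ, X - η X • ξ⟫ = 0 := by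
      have e1 : ⟪X, ξ⟫ = η X := (hη X).symm
      have e2 : ⟪ξ, X⟫ = η X := by rw [real_inner_comm]; exact (hη X).symm
      rw [inner_sub_left, inner_sub_right, inner_sub_right, real_inner_smul_left,
        real_inner_smul_left, real_inner_smul_right, real_inner_smul_right,
        real_inner_self_eq_norm_sq, hξξ]
      simp only [e1, e2]
      have := hnφ X
      rw [hn] at this
      nlinarith [this]
    have := inner_self_eq_zero.mp hz
    rw [sub_eq_zero] at this
    exact this
  have hφne : ∀ X : V, (¬ ∃ c : ℝ, X = c • ξ) → φ X ≠ 0 := by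
    intro X h h0
    exact h ⟨η X, hφzero X h0⟩
  -- inner of (-X + ηX ξ) with Y ∈ anything
  have hinnerX : ∀ X Y : V, ⟪-X + η X • ξ, Y⟫ = -⟪X, Y⟫ + η X * η Y := by
    intro X Y
    have e2 : ⟪ξ, Y⟫ = η Y := by rw [real_inner_comm]; exact (hη Y).symm
    rw [inner_add_left, inner_neg_left, real_inner_smul_left, e2]
  -- Part 2
  have hpart2 : ∀ θ ∈ Set.Icc (0 : ℝ) (Real.pi / 2),
      (∀ X ∈ W, P (P X) = Real.cos θ ^ 2 • (-X + η X • ξ)) →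
      ∀ X ∈ W, (¬ ∃ c : ℝ, X = c • ξ) →
        InnerProductGeometry.angle (φ X) (P X) = θ := by
    intro θ hθ hPP2 X hXW hXc
    have hφX : φ X ≠ 0 := hφne X hXc
    have hφXn : ‖φ X‖ ≠ 0 := norm_ne_zero_iff.mpr hφX
    have hθπ : θ ≤ Real.pi := le_trans hθ.2 (by linarith [Real.pi_pos])
    have h1 : ⟪P (P X), X⟫ = -⟪P X, P X⟫ := hPP X X hXW
    have h2 : ⟪P (P X), X⟫ = Real.cos θ ^ 2 * (-‖φ X‖ ^ 2) := by
      rw [hPP2 X hXW, real_inner_smul_left, hinnerX, real_inner_self_eq_norm_sq]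
      have := hnφ X
      nlinarith [this]
    have hPXsq : ‖P X‖ ^ 2 = Real.cos θ ^ 2 * ‖φ X‖ ^ 2 := by
      have := real_inner_self_eq_norm_sq (P X)
      nlinarith [h1, h2, this]
    have hcosnn : 0 ≤ Real.cos θ :=
      Real.cos_nonneg_of_mem_Icc ⟨by linarith [hθ.1, Real.pi_pos], hθ.2⟩
    have hPXn : ‖P X‖ = Real.cos θ * ‖φ X‖ := by
      have h := hPXsq
      rw [← mul_pow] at h
      have h1' : 0 ≤ Real.cos θ * ‖φ X‖ := mul_nonneg hcosnn (norm_nonneg _)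
      nlinarith [norm_nonneg (P X), h, h1']
    by_cases hPX : P X = 0
    · have hc0 : Real.cos θ = 0 := by
        rw [hPX, norm_zero] at hPXn
        rcases mul_eq_zero.mp hPXn.symm with h | h
        · exact h
        · exact absurd h hφXn
      have hθeq : θ = Real.pi / 2 := by
        have := Real.arccos_cos hθ.1 hθπ
        rw [hc0, Real.arccos_zero] at this
        exact this.symm
      rw [hPX, hθeq]
      simp [InnerProductGeometry.angle]
    · have hPXnz : ‖P X‖ ≠ 0 := norm_ne_zero_iff.mpr hPX
      have hcne : Real.cos θ ≠ 0 := by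
        intro h; rw [h, zero_mul] at hPXn; exact hPXnz hPXn
      have hiP : ⟪φ X, P X⟫ = ‖P X‖ ^ 2 := by
        rw [hinner X (P X) (hPW X), real_inner_self_eq_norm_sq]
      unfold InnerProductGeometry.angle
      rw [hiP, hPXn]
      have : (Real.cos θ * ‖φ X‖) ^ 2 / (‖φ X‖ * (Real.cos θ * ‖φ X‖)) = Real.cos θ := by
        field_simp
      rw [this, Real.arccos_cos hθ.1 hθπ]
  refine ⟨⟨?_, ?_⟩, hpart2⟩
  · rintro ⟨α, hα⟩
    by_cases hall : ∀ X ∈ W, ∃ c : ℝ, X = c • ξ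
    · refine ⟨Real.pi / 2, ⟨by linarith [Real.pi_pos], le_refl _⟩, ?_⟩
      intro X hXW
      obtain ⟨c, rfl⟩ := hall X hXW
      have hφ0 : φ (c • ξ) = 0 := by rw [map_smul, hφξ, smul_zero]
      have hPX : P (c • ξ) = 0 := by rw [hP, hφ0, map_zero]; rfl
      have hP0 : P 0 = 0 := by rw [hP, map_zero, map_zero]; rfl
      rw [hPX, hP0, Real.cos_pi_div_two]
      norm_num
    · push_neg at hall
      obtain ⟨X0, hX0W, hX0⟩ := hall
      have hX0' : ¬ ∃ c : ℝ, X0 = c • ξ := by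
        rintro ⟨c, hc⟩; exact hX0 c hc
      have hαval := hα X0 hX0W hX0'
      have hφX0 : φ X0 ≠ 0 := hφne X0 hX0'
      -- cos α ≥ 0
      have hcosα : 0 ≤ Real.cos α := by
        rw [← hαval]
        rw [InnerProductGeometry.cos_angle]
        have hiP : ⟪φ X0, P X0⟫ = ‖P X0‖ ^ 2 := by
          rw [hinner X0 (P X0) (hPW X0), real_inner_self_eq_norm_sq]
        rw [hiP]
        positivity
      have hα0 : 0 ≤ α := hαval ▸ InnerProductGeometry.angle_nonneg _ _
      have hαπ : α ≤ Real.pi := hαval ▸ InnerProductGeometry.angle_le_pi _ _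
      have hαhalf : α ≤ Real.pi / 2 := by
        by_contra h
        push_neg at h
        have : Real.cos α < 0 := Real.cos_neg_of_pi_div_two_lt_of_lt h (by linarith [Real.pi_pos])
        linarith
      refine ⟨α, ⟨hα0, hαhalf⟩, ?_⟩
      -- key: ⟪PX, PX⟫ = cos²α (⟪X,X⟫ - ηX²) on W
      have hkey : ∀ X ∈ W, ⟪P X, P X⟫ = Real.cos α ^ 2 * (⟪X, X⟫ - η X * η X) := by
        intro X hXW
        by_cases hc : ∃ c : ℝ, X = c • ξ
        · obtain ⟨c, rfl⟩ := hc
          have hφ0 : φ (c • ξ) = 0 := by rw [map_smul, hφξ, smul_zero]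
          have hPX : P (c • ξ) = 0 := by rw [hP, hφ0, map_zero]; rfl
          have hηc : η (c • ξ) = c := by rw [hη, real_inner_smul_left, hξξ, mul_one]
          rw [hPX, hηc, inner_zero_left, real_inner_smul_left, real_inner_smul_right, hξξ]
          ring
        · have hang := hα X hXW hc
          have hφX : φ X ≠ 0 := hφne X hc
          have hφXn : ‖φ X‖ ≠ 0 := norm_ne_zero_iff.mpr hφX
          have hiP : ⟪φ X, P X⟫ = ‖P X‖ ^ 2 := by
            rw [hinner X (P X) (hPW X), real_inner_self_eq_norm_sq]
          have hXXη : ⟪X, X⟫ - η X * η X = ‖φ X‖ ^ 2 := by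
            rw [real_inner_self_eq_norm_sq]
            nlinarith [hnφ X]
          by_cases hPX : P X = 0
          · have : α = Real.pi / 2 := by
              rw [← hang, hPX]
              simp [InnerProductGeometry.angle]
            rw [hPX, inner_zero_left, this, Real.cos_pi_div_two]
            ring
          · have hPXnz : ‖P X‖ ≠ 0 := norm_ne_zero_iff.mpr hPX
            have hcos := InnerProductGeometry.cos_angle (φ X) (P X)
            rw [hang, hiP] at hcos
            have hPXn : Real.cos α * ‖φ X‖ = ‖P X‖ := by
              rw [hcos]
              field_simp
            rw [real_inner_self_eq_norm_sq, ← hPXn, hXXη]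
            ring
      -- polarize
      have hpol : ∀ X ∈ W, ∀ Y ∈ W,
          ⟪P X, P Y⟫ = Real.cos α ^ 2 * (⟪X, Y⟫ - η X * η Y) := by
        intro X hX Y hY
        have h1 := hkey (X + Y) (W.add_mem hX hY)
        have h2 := hkey X hX
        have h3 := hkey Y hY
        rw [hPadd, hηadd] at h1
        simp only [inner_add_left, inner_add_right] at h1
        have hc1 : ⟪P Y, P X⟫ = ⟪P X, P Y⟫ := real_inner_comm _ _
        have hc2 : ⟪Y, X⟫ = ⟪X, Y⟫ := real_inner_comm _ _
        rw [hc1, hc2] at h1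
        linear_combination (h1 - h2 - h3) / 2
      intro X hXW
      set D := P (P X) - Real.cos α ^ 2 • (-X + η X • ξ) with hD
      have hDW : D ∈ W :=
        W.sub_mem (hPW (P X))
          (W.smul_mem _ (W.add_mem (W.neg_mem hXW) (W.smul_mem _ hξW)))
      have hDinner : ∀ Y ∈ W, ⟪D, Y⟫ = 0 := by
        intro Y hY
        rw [hD, inner_sub_left, hPP X Y hY, real_inner_smul_left, hinnerX,
          hpol X hXW Y hY]
        ring
      have hD0 : D = 0 := inner_self_eq_zero.mp (hDinner D hDW)
      rw [hD, sub_eq_zero] at hD0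
      exact hD0
  · rintro ⟨θ, hθ, h⟩
    exact ⟨θ, fun X hX hc => hpart2 θ hθ h X hX hc⟩
end

section
/- Let V be a finite-dimensional real inner product space equipped with an almost contact metric structure (φ, ξ, η), and let W ⊆ V be a subspace with ξ ∈ W that is pointwise slant with slant angle θ, i.e., P²X = cos²θ · (−X + η(X)ξ) for all X ∈ W. Then ⟨FX, FY⟩ = sin²θ · (⟨X, Y⟩ − η(X)η(Y)) for all X, Y ∈ W. -/
open RealInnerProductSpace

/-- If `W` (with `ξ ∈ W`) is a pointwise slant subspace with slant angle
`θ` (i.e. `P²X = cos²θ • (−X + η(X)ξ)` on `W`), then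
`⟪FX, FY⟫ = sin²θ (⟪X, Y⟫ − η(X)η(Y))` for all `X, Y ∈ W`. -/
theorem stmt_4 {V : Type*} [NormedAddCommGroup V] [InnerProductSpace ℝ V]
    [FiniteDimensional ℝ V]
    (φ : V →ₗ[ℝ] V) (ξ : V) (η : V → ℝ) (hη : ∀ X, η X = ⟪X, ξ⟫)
    (hξ : ‖ξ‖ = 1) (hφξ : φ ξ = 0)
    (hφ2 : ∀ X : V, φ (φ X) = -X + η X • ξ)
    (hmetric : ∀ X Y : V, ⟪φ X, φ Y⟫ = ⟪X, Y⟫ - η X * η Y)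
    (W : Submodule ℝ V) (hξW : ξ ∈ W)
    (P : V → V) (hP : ∀ X, P X = (W.orthogonalProjectionOnto (φ X) : V))
    (F : V → V) (hF : ∀ X, F X = φ X - P X)
    (θ : ℝ) (hθ : θ ∈ Set.Icc 0 (Real.pi / 2))
    (hslant : ∀ X ∈ W, P (P X) = Real.cos θ ^ 2 • (-X + η X • ξ)) :
    ∀ X ∈ W, ∀ Y ∈ W, ⟪F X, F Y⟫ = Real.sin θ ^ 2 * (⟪X, Y⟫ - η X * η Y) := by
  -- η ξ = 1
  have hηξ : η ξ = 1 := by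
    rw [hη, real_inner_self_eq_norm_sq, hξ]; norm_num
  -- η ∘ φ = 0
  have hηφ : ∀ X : V, η (φ X) = 0 := by
    intro X
    have h1 := hmetric (φ X) (φ X)
    rw [hφ2 X] at h1
    have h2 := hmetric X X
    have h3 : ⟪-X + η X • ξ, -X + η X • ξ⟫ = ⟪X, X⟫ - η X * η X := by
      rw [inner_add_add_self]
      simp [inner_add_add_self, inner_smul_left, inner_smul_right, inner_neg_neg,
        inner_neg_left, inner_neg_right, real_inner_self_eq_norm_sq, hξ, norm_smul, mul_pow,
        real_inner_comm X ξ, ← hη X]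
      ring
    have : η (φ X) * η (φ X) = 0 := by
      rw [h3, h2] at h1; linarith
    have := mul_self_eq_zero.mp this
    exact this
  -- skew-symmetry
  have hskew : ∀ X Y : V, ⟪φ X, Y⟫ = - ⟪X, φ Y⟫ := by
    intro X Y
    have h1 := hmetric X (φ Y)
    rw [hφ2 Y, hηφ Y, mul_zero, sub_zero] at h1
    rw [inner_add_right, inner_neg_right, inner_smul_right, ← hη (φ X), hηφ X] at h1
    linarith
  -- P X ∈ W, F X ⊥ W
  have hPW : ∀ X : V, P X ∈ W := fun X => by rw [hP]; exact (W.orthogonalProjectionOnto (φ X)).2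
  have hFW : ∀ X : V, ∀ Z ∈ W, ⟪F X, Z⟫ = 0 := by
    intro X Z hZ
    rw [hF, hP, real_inner_comm]
    exact Submodule.sub_starProjection_mem_orthogonal (K := W) (φ X) Z hZ
  intro X hX Y hY
  -- ⟪F X, F Y⟫ = ⟪φ X, φ Y⟫ - ⟪P X, φ Y⟫
  have step1 : ⟪F X, F Y⟫ = ⟪φ X, φ Y⟫ - ⟪P X, φ Y⟫ := by
    have h1 : ⟪F X, F Y⟫ = ⟪F X, φ Y⟫ := by
      rw [hF Y, inner_sub_right, hFW X (P Y) (hPW Y), sub_zero]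
    rw [h1, hF X, inner_sub_left]
  -- ⟪P X, φ Y⟫ = cos²θ (⟪X,Y⟫ - ηX ηY)
  have step2 : ⟪P X, φ Y⟫ = Real.cos θ ^ 2 * (⟪X, Y⟫ - η X * η Y) := by
    have h1 : ⟪P X, φ Y⟫ = - ⟪φ (P X), Y⟫ := by
      rw [hskew (P X) Y]; ring
    have h2 : ⟪φ (P X), Y⟫ = ⟪P (P X), Y⟫ := by
      have : φ (P X) = P (P X) + F (P X) := by rw [hF]; abel
      rw [this, inner_add_left, hFW (P X) Y hY, add_zero]
    have hY' : ⟪ξ, Y⟫ = η Y := by rw [hη, real_inner_comm]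
    rw [h1, h2, hslant X hX, inner_smul_left, inner_add_left, inner_neg_left,
      inner_smul_left, hY']
    simp only [RCLike.star_def, conj_trivial]
    ring
  rw [step1, step2, hmetric X Y]
  have : Real.sin θ ^ 2 = 1 - Real.cos θ ^ 2 := by
    have := Real.sin_sq_add_cos_sq θ; linarith
  rw [this]; ring
end

section
/- Let V be a finite-dimensional real inner product space equipped with an almost contact metric structure (φ, ξ, η), and let W ⊆ V be a subspace with ξ ∈ W that is pointwise slant with slant angle θ, i.e., P²X = cos²θ · (−X + η(X)ξ) for all X ∈ W. Then t(FX) = sin²θ · (−X + η(X)ξ) for all X ∈ W. -/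
open RealInnerProductSpace

/-- If `W` (with `ξ ∈ W`) is a pointwise slant subspace with slant angle
`θ`, then `t(FX) = sin²θ • (−X + η(X)ξ)` for all `X ∈ W`, where for a normal vector
`N ∈ W⊥`, `tN` is the orthogonal projection of `φN` onto `W`. -/
theorem stmt_5 {V : Type*} [NormedAddCommGroup V] [InnerProductSpace ℝ V]
    [FiniteDimensional ℝ V]
    (φ : V →ₗ[ℝ] V) (ξ : V) (η : V → ℝ) (hη : ∀ X, η X = ⟪X, ξ⟫)
    (hξ : ‖ξ‖ = 1) (hφξ : φ ξ = 0)
    (hφ2 : ∀ X : V, φ (φ X) = -X + η X • ξ)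
    (hmetric : ∀ X Y : V, ⟪φ X, φ Y⟫ = ⟪X, Y⟫ - η X * η Y)
    (W : Submodule ℝ V) (hξW : ξ ∈ W)
    (P : V → V) (hP : ∀ X, P X = (Submodule.orthogonalProjectionOnto W (φ X) : V))
    (F : V → V) (hF : ∀ X, F X = φ X - P X)
    (t : V → V) (ht : ∀ N ∈ Wᗮ, t N = (Submodule.orthogonalProjectionOnto W (φ N) : V))
    (f : V → V) (hf : ∀ N ∈ Wᗮ, f N = φ N - t N)
    (θ : ℝ) (hθ : θ ∈ Set.Icc 0 (Real.pi / 2))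
    (hslant : ∀ X ∈ W, P (P X) = Real.cos θ ^ 2 • (-X + η X • ξ)) :
    ∀ X ∈ W, t (F X) = Real.sin θ ^ 2 • (-X + η X • ξ) := by
  intro X hX
  have hFX : F X ∈ Wᗮ := by
    rw [hF, hP]
    exact W.sub_starProjection_mem_orthogonal (φ X)
  have hφφW : φ (φ X) ∈ W := by
    rw [hφ2]
    exact W.add_mem (W.neg_mem hX) (W.smul_mem _ hξW)
  have key : t (F X) = φ (φ X) - P (P X) := by
    rw [ht _ hFX, hF, map_sub]
    rw [map_sub (Submodule.orthogonalProjectionOnto W)]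
    push_cast
    rw [(by exact W.starProjection_eq_self_iff.mpr hφφW : (W.orthogonalProjectionOnto (φ (φ X)) : V) = φ (φ X)), hP (P X)]
  rw [key, hslant X hX, hφ2, Real.sin_sq]
  rw [sub_smul, one_smul]
end

section
/- Let V be a finite-dimensional real inner product space equipped with an almost contact metric structure (φ, ξ, η), and let W ⊆ V be a subspace admitting an orthogonal direct sum decomposition W = D ⊕ Dθ ⊕ ℝξ, where D is φ-invariant (φ(D) = D). Then the operator P maps Dθ into Dθ: for every Z ∈ Dθ, the orthogonal projection PZ of φZ onto W lies in Dθ. -/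
open RealInnerProductSpace

/-- If `W` admits an orthogonal direct sum decomposition
`W = D ⊕ Dθ ⊕ ℝξ` with `D` invariant under `φ` (`φ(D) = D`), then the tangential
operator `P` maps `Dθ` into `Dθ`: for every `Z ∈ Dθ`, the orthogonal projection
`PZ` of `φZ` onto `W` lies in `Dθ`. -/
theorem stmt_7 {V : Type*} [NormedAddCommGroup V] [InnerProductSpace ℝ V]
    [FiniteDimensional ℝ V]
    (φ : V →ₗ[ℝ] V) (ξ : V) (η : V → ℝ) (hη : ∀ X, η X = ⟪X, ξ⟫)
    (hξ : ‖ξ‖ = 1) (hφξ : φ ξ = 0)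
    (hφ2 : ∀ X : V, φ (φ X) = -X + η X • ξ)
    (hmetric : ∀ X Y : V, ⟪φ X, φ Y⟫ = ⟪X, Y⟫ - η X * η Y)
    (W D Dθ : Submodule ℝ V)
    (hdecomp : W = D ⊔ Dθ ⊔ (ℝ ∙ ξ))
    (hDDθ : ∀ X ∈ D, ∀ Z ∈ Dθ, ⟪X, Z⟫ = 0)
    (hDξ : ∀ X ∈ D, ⟪X, ξ⟫ = 0)
    (hDθξ : ∀ Z ∈ Dθ, ⟪Z, ξ⟫ = 0)
    (hinv : D.map φ = D)
    (P : V → V) (hP : ∀ X, P X = (W.orthogonalProjection (φ X) : V)) :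
    ∀ Z ∈ Dθ, P Z ∈ Dθ := by
  have hξξ : ⟪ξ, ξ⟫ = 1 := by
    rw [real_inner_self_eq_norm_sq, hξ]; norm_num
  -- η ∘ φ = 0
  have hηφ : ∀ X : V, ⟪φ X, ξ⟫ = 0 := by
    intro X
    have h := hmetric (φ X) (φ X)
    rw [hφ2 X] at h
    have h1 : ⟪X, ξ⟫ = η X := (hη X).symm
    have h2 : ⟪ξ, X⟫ = η X := by rw [real_inner_comm]; exact (hη X).symm
    have hexp : ⟪-X + η X • ξ, -X + η X • ξ⟫ = ⟪X, X⟫ - η X * η X := by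
      simp only [inner_add_add_self, real_inner_smul_left, real_inner_smul_right,
        inner_neg_left, inner_neg_right, inner_neg_neg, h1, h2, hξξ]
      ring
    have hm := hmetric X X
    rw [hexp, hη (φ X)] at h
    have h3 : ⟪φ X, ξ⟫ * ⟪φ X, ξ⟫ = 0 := by linarith
    exact mul_self_eq_zero.mp h3
  intro Z hZ
  -- projection preserves inner products with vectors in W
  have hproj : ∀ w ∈ W, ⟪P Z, w⟫ = ⟪φ Z, w⟫ := by
    intro w hw
    have h := Submodule.starProjection_inner_eq_zero (K := W) (φ Z) w hw
    rw [Submodule.starProjection_apply, inner_sub_left] at h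
    rw [hP]
    linarith
  -- P Z ⊥ D
  have hPD : ∀ X ∈ D, ⟪P Z, X⟫ = 0 := by
    intro X hX
    rw [← hinv] at hX
    obtain ⟨Y, hY, rfl⟩ := hX
    have hXW : φ Y ∈ W := by
      rw [hdecomp]
      exact Submodule.mem_sup_left (Submodule.mem_sup_left (hinv ▸ ⟨Y, hY, rfl⟩))
    rw [hproj _ hXW, hmetric, hη, hη, hDθξ Z hZ]
    have hZY : ⟪Z, Y⟫ = 0 := by rw [real_inner_comm]; exact hDDθ Y hY Z hZ
    rw [hZY]; ring
  -- P Z ⊥ ξ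
  have hPξ : ⟪P Z, ξ⟫ = 0 := by
    have hξW : ξ ∈ W := by
      rw [hdecomp]
      exact Submodule.mem_sup_right (Submodule.mem_span_singleton_self ξ)
    rw [hproj _ hξW, hηφ]
  -- decompose P Z
  have hPW : P Z ∈ W := by rw [hP]; exact (W.orthogonalProjection (φ Z)).2
  rw [hdecomp] at hPW
  obtain ⟨u, hu, s, hs, hsum⟩ := Submodule.mem_sup.mp hPW
  obtain ⟨d, hd, z, hz, hdz⟩ := Submodule.mem_sup.mp hu
  obtain ⟨c, hc⟩ := Submodule.mem_span_singleton.mp hs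
  have hPeq : P Z = d + z + c • ξ := by rw [← hsum, ← hdz, ← hc]
  have hd0 : d = 0 := by
    have h1 : ⟪P Z, d⟫ = 0 := hPD d hd
    have hzd : ⟪z, d⟫ = 0 := by rw [real_inner_comm]; exact hDDθ d hd z hz
    have hξd : ⟪ξ, d⟫ = 0 := by rw [real_inner_comm]; exact hDξ d hd
    rw [hPeq, inner_add_left, inner_add_left, inner_smul_left, hzd, hξd] at h1
    have : ⟪d, d⟫ = 0 := by simpa using h1
    exact inner_self_eq_zero.mp this
  have hc0 : c = 0 := by
    have h1 : ⟪P Z, ξ⟫ = 0 := hPξ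
    rw [hPeq, inner_add_left, inner_add_left, inner_smul_left,
      hDξ d hd, hDθξ z hz, hξξ] at h1
    simpa using h1
  rw [hPeq, hd0, hc0]
  simpa using hz
end

section
/- Let V be a finite-dimensional real inner product space equipped with an almost contact metric structure (φ, ξ, η), and let W ⊆ V be a subspace admitting an orthogonal direct sum decomposition W = D ⊕ Dθ ⊕ ℝξ, where D is φ-invariant (φ(D) = D). Let F(Dθ) = {FZ : Z ∈ Dθ} ⊆ W⊥ and let ν be the orthogonal complement of F(Dθ) inside W⊥. Then ν is φ-invariant: φ(ν) ⊆ ν. Consequently W⊥ decomposes orthogonally as W⊥ = F(Dθ) ⊕ ν with ν invariant under φ. -/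
open RealInnerProductSpace

/-- If `W` admits an orthogonal direct sum decomposition
`W = D ⊕ Dθ ⊕ ℝξ` with `D` invariant under `φ`, let `FDθ = {FZ : Z ∈ Dθ} ⊆ W⊥`
and let `ν` be the orthogonal complement of `FDθ` inside `W⊥`. Then `ν` is
`φ`-invariant, and `W⊥` decomposes orthogonally as `W⊥ = FDθ ⊕ ν`. -/
theorem stmt_8 {V : Type*} [NormedAddCommGroup V] [InnerProductSpace ℝ V]
    [FiniteDimensional ℝ V]
    (φ : V →ₗ[ℝ] V) (ξ : V) (η : V → ℝ) (hη : ∀ X, η X = ⟪X, ξ⟫)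
    (hξ : ‖ξ‖ = 1) (hφξ : φ ξ = 0)
    (hφ2 : ∀ X : V, φ (φ X) = -X + η X • ξ)
    (hmetric : ∀ X Y : V, ⟪φ X, φ Y⟫ = ⟪X, Y⟫ - η X * η Y)
    (W D Dθ : Submodule ℝ V)
    (hdecomp : W = D ⊔ Dθ ⊔ (ℝ ∙ ξ))
    (hDDθ : ∀ X ∈ D, ∀ Z ∈ Dθ, ⟪X, Z⟫ = 0)
    (hDξ : ∀ X ∈ D, ⟪X, ξ⟫ = 0)
    (hDθξ : ∀ Z ∈ Dθ, ⟪Z, ξ⟫ = 0)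
    (hinv : D.map φ = D)
    (P : V → V) (hP : ∀ X, P X = (W.orthogonalProjection (φ X) : V))
    (F : V → V) (hF : ∀ X, F X = φ X - P X)
    (FDθ : Submodule ℝ V) (hFDθ : (FDθ : Set V) = F '' (Dθ : Set V))
    (ν : Submodule ℝ V) (hν : ν = Wᗮ ⊓ FDθᗮ) :
    (∀ N ∈ ν, φ N ∈ ν) ∧ FDθ ≤ Wᗮ ∧ FDθ ⊔ ν = Wᗮ := by
  have hξ0 : ξ ≠ 0 := by
    intro h; rw [h, norm_zero] at hξ; norm_num at hξ
  -- η ∘ φ = 0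
  have hηφ : ∀ X, η (φ X) = 0 := by
    intro X
    have h1 : φ (φ (φ X)) = -(φ X) + η (φ X) • ξ := hφ2 (φ X)
    have h2 : φ (φ (φ X)) = -(φ X) := by
      rw [hφ2 X, map_add, map_neg, map_smul, hφξ, smul_zero, add_zero]
    rw [h2, left_eq_add] at h1
    rcases smul_eq_zero.mp h1 with h | h
    · exact h
    · exact absurd h hξ0
  -- skew-symmetry of φ
  have hskew : ∀ X Y : V, ⟪φ X, Y⟫ = -⟪X, φ Y⟫ := by
    intro X Y
    have h := hmetric X (φ Y)
    rw [hηφ, mul_zero, sub_zero, hφ2 Y, inner_add_right, inner_neg_right,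
      real_inner_smul_right] at h
    have hXξ : ⟪φ X, ξ⟫ = 0 := by rw [← hη]; exact hηφ X
    rw [hXξ, mul_zero, add_zero] at h
    linarith
  have hDW : D ≤ W := by rw [hdecomp]; exact le_sup_of_le_left le_sup_left
  have hDθW : Dθ ≤ W := by rw [hdecomp]; exact le_sup_of_le_left le_sup_right
  have hξW : ξ ∈ W := by
    rw [hdecomp]; exact Submodule.mem_sup_right (Submodule.mem_span_singleton_self ξ)
  -- FDθ ≤ Wᗮ
  have hFW : FDθ ≤ Wᗮ := by
    intro x hx
    have hx' : x ∈ F '' (Dθ : Set V) := by rw [← hFDθ]; exact hx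
    obtain ⟨Z, _, rfl⟩ := hx'
    rw [hF, hP]
    exact Submodule.sub_starProjection_mem_orthogonal (K := W) (φ Z)
  have hνW : ν ≤ Wᗮ := by rw [hν]; exact inf_le_left
  -- φ-invariance of ν
  have key : ∀ N ∈ ν, φ N ∈ ν := by
    intro N hN
    rw [hν] at hN
    obtain ⟨hNW, hNF⟩ := hN
    have hNW' := (Submodule.mem_orthogonal W N).mp hNW
    have hNF' := (Submodule.mem_orthogonal FDθ N).mp hNF
    have hφNW : φ N ∈ Wᗮ := by
      rw [Submodule.mem_orthogonal]
      intro u hu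
      rw [hdecomp] at hu
      obtain ⟨a, ha, c, hc, rfl⟩ := Submodule.mem_sup.mp hu
      obtain ⟨y, hy, z, hz, rfl⟩ := Submodule.mem_sup.mp ha
      have hy0 : ⟪y, φ N⟫ = 0 := by
        have hφy : φ y ∈ D := by
          rw [← hinv]; exact Submodule.mem_map_of_mem hy
        rw [real_inner_comm, hskew, real_inner_comm, hNW' (φ y) (hDW hφy)]
        ring
      have hz0 : ⟪z, φ N⟫ = 0 := by
        have hφz : φ z = P z + F z := by rw [hF]; abel
        have hPz : P z ∈ W := by rw [hP]; exact SetLike.coe_mem _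
        have hFz : F z ∈ FDθ := by
          rw [← SetLike.mem_coe, hFDθ]; exact ⟨z, hz, rfl⟩
        rw [real_inner_comm, hskew, real_inner_comm, hφz, inner_add_left,
          hNW' (P z) hPz, hNF' (F z) hFz]
        ring
      have hc0 : ⟪c, φ N⟫ = 0 := by
        obtain ⟨r, rfl⟩ := Submodule.mem_span_singleton.mp hc
        rw [real_inner_smul_left, real_inner_comm, ← hη, hηφ, mul_zero]
      rw [inner_add_left, inner_add_left, hy0, hz0, hc0]
      ring
    have hφNF : φ N ∈ FDθᗮ := by
      rw [Submodule.mem_orthogonal]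
      intro u hu
      have hu' : u ∈ F '' (Dθ : Set V) := by rw [← hFDθ]; exact hu
      obtain ⟨Z, hZ, rfl⟩ := hu'
      rw [hF, inner_sub_left]
      have h1 : ⟪φ Z, φ N⟫ = 0 := by
        rw [hmetric, hNW' Z (hDθW hZ), hη N, real_inner_comm,
          hNW' ξ hξW, mul_zero, sub_zero]
      have hPZ : P Z ∈ W := by rw [hP]; exact SetLike.coe_mem _
      have h2 : ⟪P Z, φ N⟫ = 0 :=
        (Submodule.mem_orthogonal W (φ N)).mp hφNW (P Z) hPZ
      rw [h1, h2, sub_zero]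
    rw [hν]
    exact ⟨hφNW, hφNF⟩
  refine ⟨key, hFW, le_antisymm (sup_le hFW hνW) ?_⟩
  intro x hx
  have hx1 : (FDθ.orthogonalProjection x : V) ∈ FDθ := SetLike.coe_mem _
  have hx2 : x - FDθ.orthogonalProjection x ∈ FDθᗮ :=
    Submodule.sub_starProjection_mem_orthogonal (K := FDθ) x
  have hx3 : x - (FDθ.orthogonalProjection x : V) ∈ Wᗮ :=
    Submodule.sub_mem _ hx (hFW hx1)
  have hxeq : x = (FDθ.orthogonalProjection x : V) +
      (x - (FDθ.orthogonalProjection x : V)) := by abel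
  rw [hxeq]
  refine Submodule.add_mem _ (Submodule.mem_sup_left hx1) (Submodule.mem_sup_right ?_)
  rw [hν]
  exact ⟨hx3, hx2⟩
end

section
/- In ℝ⁷ with the structure (φ, ξ) described below, fix real parameters w, t and set Z₁ = e₁ − e₂, Z₂ = e₁ + e₂, Z₃ = −t·sin w·e₃ + t·cos w·e₄ + cos t·e₅ + sin t·e₆, Z₄ = cos w·e₃ + sin w·e₄ − w·sin t·e₅ + w·cos t·e₆, and T = span{Z₁, Z₂, Z₃, Z₄, e₇}. Then for every nonzero X ∈ span{Z₃, Z₄}, writing PX for the orthogonal projection of φX onto T, one has ‖PX‖² · (t² + 1)(w² + 1) = (t − w)² · ‖φX‖². Hence the cosine of the angle between φX and T equals |t − w| / √((t² + 1)(w² + 1)), independently of the choice of nonzero X ∈ span{Z₃, Z₄}; i.e., span{Z₃, Z₄} is pointwise slant with slant function θ = arccos(|t − w| / √((t² + 1)(w² + 1))). -/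
open Real

set_option maxHeartbeats 1000000 in

/-- In `ℝ⁷` with the contact structure `φ` (and `ξ = e₇`), for real
parameters `w, t`, with `Z₁ = e₁ − e₂`, `Z₂ = e₁ + e₂`,
`Z₃ = −t sin w·e₃ + t cos w·e₄ + cos t·e₅ + sin t·e₆`,
`Z₄ = cos w·e₃ + sin w·e₄ − w sin t·e₅ + w cos t·e₆`, and
`T = span{Z₁, Z₂, Z₃, Z₄, e₇}`: for every nonzero `X ∈ span{Z₃, Z₄}`, writing `PX`
for the orthogonal projection of `φX` onto `T`, one has
`‖PX‖²(t² + 1)(w² + 1) = (t − w)²‖φX‖²`, and the angle between `φX` and `T`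
(i.e. the angle between `φX` and `PX`) equals
`arccos(|t − w| / √((t² + 1)(w² + 1)))`, independently of `X`. -/
theorem stmt_10 (w t : ℝ)
    (e : Fin 7 → EuclideanSpace ℝ (Fin 7))
    (he : ∀ i, e i = EuclideanSpace.single i 1)
    (φ : EuclideanSpace ℝ (Fin 7) →ₗ[ℝ] EuclideanSpace ℝ (Fin 7))
    (h1 : φ (e 0) = -e 1) (h2 : φ (e 1) = e 0)
    (h3 : φ (e 2) = -e 3) (h4 : φ (e 3) = e 2)
    (h5 : φ (e 4) = -e 5) (h6 : φ (e 5) = e 4)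
    (h7 : φ (e 6) = 0) (ξ : EuclideanSpace ℝ (Fin 7)) (hξ : ξ = e 6)
    (Z₁ Z₂ Z₃ Z₄ : EuclideanSpace ℝ (Fin 7))
    (hZ₁ : Z₁ = e 0 - e 1) (hZ₂ : Z₂ = e 0 + e 1)
    (hZ₃ : Z₃ = (-(t * Real.sin w)) • e 2 + (t * Real.cos w) • e 3 +
      Real.cos t • e 4 + Real.sin t • e 5)
    (hZ₄ : Z₄ = Real.cos w • e 2 + Real.sin w • e 3 +
      (-(w * Real.sin t)) • e 4 + (w * Real.cos t) • e 5)
    (T : Submodule ℝ (EuclideanSpace ℝ (Fin 7)))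
    (hT : T = Submodule.span ℝ {Z₁, Z₂, Z₃, Z₄, e 6}) :
    ∀ X ∈ Submodule.span ℝ {Z₃, Z₄}, X ≠ 0 →
      ‖(Submodule.orthogonalProjection T (φ X) : EuclideanSpace ℝ (Fin 7))‖ ^ 2 *
          ((t ^ 2 + 1) * (w ^ 2 + 1)) = (t - w) ^ 2 * ‖φ X‖ ^ 2 ∧
      InnerProductGeometry.angle (φ X)
          ((Submodule.orthogonalProjection T (φ X) : EuclideanSpace ℝ (Fin 7))) =
        Real.arccos (|t - w| / Real.sqrt ((t ^ 2 + 1) * (w ^ 2 + 1))) := by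
  intro X hXmem hX0
  obtain ⟨a, b, hX⟩ := Submodule.mem_span_pair.mp hXmem
  have hee : ∀ i j : Fin 7, (inner ℝ (e i) (e j) : ℝ) = if i = j then 1 else 0 := by
    intro i j
    rw [he, he, EuclideanSpace.inner_single_left]
    simp [EuclideanSpace.single_apply, eq_comm]
  have ht1 : (0:ℝ) < t ^ 2 + 1 := by positivity
  have hw1 : (0:ℝ) < w ^ 2 + 1 := by positivity
  have hφ3 : φ Z₃ = (t * Real.cos w) • e 2 + (t * Real.sin w) • e 3 +
      Real.sin t • e 4 + (-Real.cos t) • e 5 := by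
    rw [hZ₃]; simp only [map_add, map_smul, h3, h4, h5, h6]; module
  have hφ4 : φ Z₄ = Real.sin w • e 2 + (-Real.cos w) • e 3 +
      (w * Real.cos t) • e 4 + (w * Real.sin t) • e 5 := by
    rw [hZ₄]; simp only [map_add, map_smul, h3, h4, h5, h6]; module
  have hφX : φ X = a • φ Z₃ + b • φ Z₄ := by rw [← hX]; simp
  -- inner products
  have i33 : (inner ℝ Z₃ Z₃ : ℝ) = t ^ 2 + 1 := by
    rw [hZ₃]
    simp only [inner_add_left, inner_add_right, inner_smul_left, inner_smul_right, hee,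
      RCLike.star_def, conj_trivial]
    simp only [Fin.reduceEq, reduceIte]
    norm_num
    linear_combination (t ^ 2) * (Real.sin_sq_add_cos_sq w) + Real.sin_sq_add_cos_sq t
  have i44 : (inner ℝ Z₄ Z₄ : ℝ) = w ^ 2 + 1 := by
    rw [hZ₄]
    simp only [inner_add_left, inner_add_right, inner_smul_left, inner_smul_right, hee,
      RCLike.star_def, conj_trivial]
    simp only [Fin.reduceEq, reduceIte]
    norm_num
    linear_combination (w ^ 2) * (Real.sin_sq_add_cos_sq t) + Real.sin_sq_add_cos_sq w
  have i34 : (inner ℝ Z₃ Z₄ : ℝ) = 0 := by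
    rw [hZ₃, hZ₄]
    simp only [inner_add_left, inner_add_right, inner_smul_left, inner_smul_right, hee,
      RCLike.star_def, conj_trivial]
    simp only [Fin.reduceEq, reduceIte]
    norm_num
    ring
  have ip33 : (inner ℝ Z₃ (φ Z₃) : ℝ) = 0 := by
    rw [hφ3, hZ₃]
    simp only [inner_add_left, inner_add_right, inner_smul_left, inner_smul_right, hee,
      RCLike.star_def, conj_trivial]
    simp only [Fin.reduceEq, reduceIte]
    norm_num
    ring
  have ip34 : (inner ℝ Z₃ (φ Z₄) : ℝ) = w - t := by
    rw [hφ4, hZ₃]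
    simp only [inner_add_left, inner_add_right, inner_smul_left, inner_smul_right, hee,
      RCLike.star_def, conj_trivial]
    simp only [Fin.reduceEq, reduceIte]
    norm_num
    linear_combination (-t) * (Real.sin_sq_add_cos_sq w) + w * Real.sin_sq_add_cos_sq t
  have ip43 : (inner ℝ Z₄ (φ Z₃) : ℝ) = t - w := by
    rw [hφ3, hZ₄]
    simp only [inner_add_left, inner_add_right, inner_smul_left, inner_smul_right, hee,
      RCLike.star_def, conj_trivial]
    simp only [Fin.reduceEq, reduceIte]
    norm_num
    linear_combination t * (Real.sin_sq_add_cos_sq w) + (-w) * Real.sin_sq_add_cos_sq t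
  have ip44 : (inner ℝ Z₄ (φ Z₄) : ℝ) = 0 := by
    rw [hφ4, hZ₄]
    simp only [inner_add_left, inner_add_right, inner_smul_left, inner_smul_right, hee,
      RCLike.star_def, conj_trivial]
    simp only [Fin.reduceEq, reduceIte]
    norm_num
    ring
  have ipp33 : (inner ℝ (φ Z₃) (φ Z₃) : ℝ) = t ^ 2 + 1 := by
    rw [hφ3]
    simp only [inner_add_left, inner_add_right, inner_smul_left, inner_smul_right, hee,
      RCLike.star_def, conj_trivial]
    simp only [Fin.reduceEq, reduceIte]
    norm_num
    linear_combination (t ^ 2) * (Real.sin_sq_add_cos_sq w) + Real.sin_sq_add_cos_sq t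
  have ipp44 : (inner ℝ (φ Z₄) (φ Z₄) : ℝ) = w ^ 2 + 1 := by
    rw [hφ4]
    simp only [inner_add_left, inner_add_right, inner_smul_left, inner_smul_right, hee,
      RCLike.star_def, conj_trivial]
    simp only [Fin.reduceEq, reduceIte]
    norm_num
    linear_combination (w ^ 2) * (Real.sin_sq_add_cos_sq t) + Real.sin_sq_add_cos_sq w
  have ipp34 : (inner ℝ (φ Z₃) (φ Z₄) : ℝ) = 0 := by
    rw [hφ3, hφ4]
    simp only [inner_add_left, inner_add_right, inner_smul_left, inner_smul_right, hee,
      RCLike.star_def, conj_trivial]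
    simp only [Fin.reduceEq, reduceIte]
    norm_num
    ring
  -- the projection candidate
  set c₃ : ℝ := b * (w - t) / (t ^ 2 + 1) with hc3
  set c₄ : ℝ := a * (t - w) / (w ^ 2 + 1) with hc4
  set P : EuclideanSpace ℝ (Fin 7) := c₃ • Z₃ + c₄ • Z₄ with hP
  set Y : EuclideanSpace ℝ (Fin 7) := φ X - P with hY
  have hy3 : (inner ℝ Z₃ Y : ℝ) = 0 := by
    rw [hY, hP, hφX]
    simp only [inner_sub_right, inner_add_right, inner_smul_right, i33, i34, ip33, ip34]
    rw [hc3]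
    field_simp
    ring
  have hy4 : (inner ℝ Z₄ Y : ℝ) = 0 := by
    rw [hY, hP, hφX]
    have i43 : (inner ℝ Z₄ Z₃ : ℝ) = 0 := by rw [real_inner_comm]; exact i34
    simp only [inner_sub_right, inner_add_right, inner_smul_right, i43, i44, ip43, ip44]
    rw [hc4]
    field_simp
    ring
  have hbase : ∀ i : Fin 7, i = 0 ∨ i = 1 ∨ i = 6 → (inner ℝ (e i) Y : ℝ) = 0 := by
    intro i hi
    rw [hY, hP, hφX, hφ3, hφ4, hZ₃, hZ₄]
    simp only [inner_sub_right, inner_add_right, inner_smul_right, hee]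
    rcases hi with h | h | h <;> subst h <;>
      simp only [Fin.reduceEq, reduceIte] <;> norm_num
  have hy1 : (inner ℝ Z₁ Y : ℝ) = 0 := by
    rw [hZ₁, inner_sub_left, hbase 0 (by norm_num), hbase 1 (by norm_num)]; ring
  have hy2 : (inner ℝ Z₂ Y : ℝ) = 0 := by
    rw [hZ₂, inner_add_left, hbase 0 (by norm_num), hbase 1 (by norm_num)]; ring
  have hPmem : P ∈ T := by
    rw [hT, hP]
    refine Submodule.add_mem _ (Submodule.smul_mem _ _ ?_) (Submodule.smul_mem _ _ ?_) <;>
      exact Submodule.subset_span (by simp)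
  have hproj : ((Submodule.orthogonalProjection T (φ X)) : EuclideanSpace ℝ (Fin 7)) = P := by
    rw [← Submodule.starProjection_apply]
    refine Submodule.eq_starProjection_of_mem_of_inner_eq_zero hPmem ?_
    intro v hv
    rw [hT] at hv
    have : (inner ℝ v Y : ℝ) = 0 := by
      induction hv using Submodule.span_induction with
      | mem x hx =>
        rcases hx with h | h | h | h | h
        · rw [h]; exact hy1
        · rw [h]; exact hy2
        · rw [h]; exact hy3
        · rw [show x = Z₄ from h]; exact hy4
        · rw [show x = e 6 from h]; exact hbase 6 (by norm_num)
      | zero => simp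
      | add x y hx hy ihx ihy => rw [inner_add_left, ihx, ihy]; ring
      | smul r x hx ih => rw [real_inner_smul_left, ih]; ring
    rw [real_inner_comm]; exact this
  have hnP : ‖P‖ ^ 2 = c₃ ^ 2 * (t ^ 2 + 1) + c₄ ^ 2 * (w ^ 2 + 1) := by
    rw [← real_inner_self_eq_norm_sq, hP]
    have i43 : (inner ℝ Z₄ Z₃ : ℝ) = 0 := by rw [real_inner_comm]; exact i34
    simp only [inner_add_left, inner_add_right, inner_smul_left, inner_smul_right, i33, i34,
      i43, i44, RCLike.star_def, conj_trivial]
    ring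
  have hnX : ‖φ X‖ ^ 2 = a ^ 2 * (t ^ 2 + 1) + b ^ 2 * (w ^ 2 + 1) := by
    rw [← real_inner_self_eq_norm_sq, hφX]
    have i43 : (inner ℝ (φ Z₄) (φ Z₃) : ℝ) = 0 := by rw [real_inner_comm]; exact ipp34
    simp only [inner_add_left, inner_add_right, inner_smul_left, inner_smul_right, ipp33,
      ipp34, i43, ipp44, RCLike.star_def, conj_trivial]
    ring
  have hmain : ‖P‖ ^ 2 * ((t ^ 2 + 1) * (w ^ 2 + 1)) = (t - w) ^ 2 * ‖φ X‖ ^ 2 := by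
    rw [hnP, hnX, hc3, hc4]
    field_simp
    ring
  have hab : a ≠ 0 ∨ b ≠ 0 := by
    by_contra h
    push_neg at h
    exact hX0 (by rw [← hX, h.1, h.2]; simp)
  have hnXpos : 0 < ‖φ X‖ ^ 2 := by
    rw [hnX]
    rcases hab with h | h
    · have : 0 < a ^ 2 := by positivity
      nlinarith [sq_nonneg b]
    · have : 0 < b ^ 2 := by positivity
      nlinarith [sq_nonneg a]
  have hnXne : ‖φ X‖ ≠ 0 := by
    intro h; rw [h] at hnXpos; simp at hnXpos
  have hsq : Real.sqrt ((t ^ 2 + 1) * (w ^ 2 + 1)) ^ 2 = (t ^ 2 + 1) * (w ^ 2 + 1) :=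
    Real.sq_sqrt (by positivity)
  have hsqpos : 0 < Real.sqrt ((t ^ 2 + 1) * (w ^ 2 + 1)) :=
    Real.sqrt_pos.mpr (by positivity)
  have hXP : (inner ℝ (φ X) P : ℝ) = ‖P‖ ^ 2 := by
    have h0 : (inner ℝ P Y : ℝ) = 0 := by
      rw [hP, inner_add_left, real_inner_smul_left, real_inner_smul_left, hy3, hy4]
      ring
    have h1 : (inner ℝ Y P : ℝ) = 0 := by rw [real_inner_comm]; exact h0
    have h2 : (inner ℝ (φ X) P : ℝ) = inner ℝ Y P + inner ℝ P P := by
      rw [hY, inner_sub_left]; ring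
    rw [h2, h1, real_inner_self_eq_norm_sq]; ring
  constructor
  · rw [hproj]; exact hmain
  · rw [hproj, InnerProductGeometry.angle]
    congr 1
    rw [hXP]
    rcases eq_or_ne ‖P‖ 0 with hP0 | hP0
    · rw [hP0]
      have htw : (t - w) ^ 2 * ‖φ X‖ ^ 2 = 0 := by rw [← hmain, hP0]; ring
      have : t - w = 0 := by
        rcases mul_eq_zero.mp htw with h | h
        · exact pow_eq_zero_iff (n := 2) (by norm_num) |>.mp h
        · exact absurd h hnXpos.ne'
      rw [this]
      simp
    · have hnPpos : 0 < ‖P‖ := lt_of_le_of_ne (norm_nonneg _) (Ne.symm hP0)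
      have hnXpos' : 0 < ‖φ X‖ := lt_of_le_of_ne (norm_nonneg _) (Ne.symm hnXne)
      have key : ‖P‖ * Real.sqrt ((t ^ 2 + 1) * (w ^ 2 + 1)) = |t - w| * ‖φ X‖ := by
        have hA : 0 ≤ ‖P‖ * Real.sqrt ((t ^ 2 + 1) * (w ^ 2 + 1)) := by positivity
        have hB : 0 ≤ |t - w| * ‖φ X‖ := by positivity
        have hsq2 : (‖P‖ * Real.sqrt ((t ^ 2 + 1) * (w ^ 2 + 1))) ^ 2
            = (|t - w| * ‖φ X‖) ^ 2 := by
          rw [mul_pow, mul_pow, hsq, sq_abs]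
          linarith [hmain]
        calc ‖P‖ * Real.sqrt ((t ^ 2 + 1) * (w ^ 2 + 1))
            = Real.sqrt ((‖P‖ * Real.sqrt ((t ^ 2 + 1) * (w ^ 2 + 1))) ^ 2) :=
              (Real.sqrt_sq hA).symm
          _ = Real.sqrt ((|t - w| * ‖φ X‖) ^ 2) := by rw [hsq2]
          _ = |t - w| * ‖φ X‖ := Real.sqrt_sq hB
      have hstep : ‖P‖ ^ 2 / (‖φ X‖ * ‖P‖) = ‖P‖ / ‖φ X‖ := by
        rw [sq, mul_comm ‖φ X‖ ‖P‖, mul_div_mul_left _ _ hP0]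
      rw [hstep, div_eq_div_iff hnXpos'.ne' hsqpos.ne']
      linarith [key]
end

section
/- In ℝ⁷ with the structure (φ, ξ) described below, fix real parameters w, t and set Z₁ = e₁ − e₂, Z₂ = e₁ + e₂, Z₃ = −t·sin w·e₃ + t·cos w·e₄ + cos t·e₅ + sin t·e₆, Z₄ = cos w·e₃ + sin w·e₄ − w·sin t·e₅ + w·cos t·e₆, and T = span{Z₁, Z₂, Z₃, Z₄, e₇}. Let P : T → T denote the map sending Y ∈ T to the orthogonal projection of φY onto T. Then P maps span{Z₃, Z₄} into itself, and for every X ∈ span{Z₃, Z₄} one has P(P(X)) = −((t − w)² / ((t² + 1)(w² + 1))) · X. -/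
set_option maxHeartbeats 2000000


/-- In `ℝ⁷` with the contact structure `φ` (and `ξ = e₇`), for real
parameters `w, t`, with `Z₁, Z₂, Z₃, Z₄` as in the example and
`T = span{Z₁, Z₂, Z₃, Z₄, e₇}`, let `P` send `Y` to the orthogonal projection of
`φY` onto `T`. Then `P` maps `span{Z₃, Z₄}` into itself, and for every
`X ∈ span{Z₃, Z₄}` one has `P(P X) = −((t − w)² / ((t² + 1)(w² + 1))) • X`. -/
theorem stmt_11 (w t : ℝ)
    (e : Fin 7 → EuclideanSpace ℝ (Fin 7))
    (he : ∀ i, e i = EuclideanSpace.single i 1)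
    (φ : EuclideanSpace ℝ (Fin 7) →ₗ[ℝ] EuclideanSpace ℝ (Fin 7))
    (h1 : φ (e 0) = -e 1) (h2 : φ (e 1) = e 0)
    (h3 : φ (e 2) = -e 3) (h4 : φ (e 3) = e 2)
    (h5 : φ (e 4) = -e 5) (h6 : φ (e 5) = e 4)
    (h7 : φ (e 6) = 0) (ξ : EuclideanSpace ℝ (Fin 7)) (hξ : ξ = e 6)
    (Z₁ Z₂ Z₃ Z₄ : EuclideanSpace ℝ (Fin 7))
    (hZ₁ : Z₁ = e 0 - e 1) (hZ₂ : Z₂ = e 0 + e 1)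
    (hZ₃ : Z₃ = (-(t * Real.sin w)) • e 2 + (t * Real.cos w) • e 3 +
      Real.cos t • e 4 + Real.sin t • e 5)
    (hZ₄ : Z₄ = Real.cos w • e 2 + Real.sin w • e 3 +
      (-(w * Real.sin t)) • e 4 + (w * Real.cos t) • e 5)
    (T : Submodule ℝ (EuclideanSpace ℝ (Fin 7)))
    (hT : T = Submodule.span ℝ {Z₁, Z₂, Z₃, Z₄, e 6})
    (P : EuclideanSpace ℝ (Fin 7) → EuclideanSpace ℝ (Fin 7))
    (hP : ∀ Y, P Y = (T.orthogonalProjection (φ Y) : EuclideanSpace ℝ (Fin 7))) :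
    ∀ X ∈ Submodule.span ℝ {Z₃, Z₄},
      P X ∈ Submodule.span ℝ {Z₃, Z₄} ∧
      P (P X) = (-((t - w) ^ 2 / ((t ^ 2 + 1) * (w ^ 2 + 1)))) • X := by
  have hw1 : w ^ 2 + 1 ≠ 0 := by positivity
  have ht1 : t ^ 2 + 1 ≠ 0 := by positivity
  have hst := Real.sin_sq_add_cos_sq t
  have hsw := Real.sin_sq_add_cos_sq w
  have ipe : ∀ i j : Fin 7, (inner ℝ (e i) (e j) : ℝ) = if i = j then 1 else 0 := by
    intro i j
    rw [he, he, EuclideanSpace.inner_single_left]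
    simp [EuclideanSpace.single_apply, eq_comm]
  -- reduction of orthogonality to generators
  have key : ∀ v : EuclideanSpace ℝ (Fin 7),
      (∀ g ∈ ({Z₁, Z₂, Z₃, Z₄, e 6} : Set (EuclideanSpace ℝ (Fin 7))), (inner ℝ v g : ℝ) = 0) →
      ∀ y ∈ T, (inner ℝ v y : ℝ) = 0 := by
    intro v hv y hy
    rw [hT] at hy
    induction hy using Submodule.span_induction with
    | mem x hx => exact hv x hx
    | zero => exact inner_zero_right v
    | add x y _ _ hx hy => rw [inner_add_right, hx, hy, add_zero]
    | smul a x _ hx => rw [real_inner_smul_right, hx, mul_zero]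
  have hPZ3 : P Z₃ = ((t - w) / (w ^ 2 + 1)) • Z₄ := by
    rw [hP, ← Submodule.starProjection_apply]
    apply Submodule.eq_starProjection_of_mem_of_inner_eq_zero
    · rw [hT]
      exact Submodule.smul_mem _ _ (Submodule.subset_span (by simp))
    · apply key
      intro g hg
      have hφ : φ Z₃ = (t * Real.cos w) • e 2 + (t * Real.sin w) • e 3 +
          Real.sin t • e 4 + (-(Real.cos t)) • e 5 := by
        rw [hZ₃]
        simp only [map_add, map_smul, h3, h4, h5, h6]
        module
      simp only [Set.mem_insert_iff, Set.mem_singleton_iff] at hg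
      rcases hg with h | h | h | h | h <;> subst h <;> rw [hφ] <;>
        simp only [hZ₁, hZ₂, hZ₃, hZ₄, inner_sub_left, inner_sub_right, inner_add_left,
          inner_add_right, real_inner_smul_left, real_inner_smul_right, ipe] <;>
        simp +decide <;> field_simp <;>
        (first
          | linear_combination (t * w ^ 2 + w) * (hsw - hst)
          | linear_combination (t * w ^ 2 + w) * (hst - hsw)
          | linear_combination (t + t ^ 2 * w) * (hst - hsw)
          | linear_combination (t + t ^ 2 * w) * (hsw - hst)
          | ring)
  have hPZ4 : P Z₄ = ((w - t) / (t ^ 2 + 1)) • Z₃ := by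
    rw [hP, ← Submodule.starProjection_apply]
    apply Submodule.eq_starProjection_of_mem_of_inner_eq_zero
    · rw [hT]
      exact Submodule.smul_mem _ _ (Submodule.subset_span (by simp))
    · apply key
      intro g hg
      have hφ : φ Z₄ = Real.sin w • e 2 + (-(Real.cos w)) • e 3 +
          (w * Real.cos t) • e 4 + (w * Real.sin t) • e 5 := by
        rw [hZ₄]
        simp only [map_add, map_smul, h3, h4, h5, h6]
        module
      simp only [Set.mem_insert_iff, Set.mem_singleton_iff] at hg
      rcases hg with h | h | h | h | h <;> subst h <;> rw [hφ] <;>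
        simp only [hZ₁, hZ₂, hZ₃, hZ₄, inner_sub_left, inner_sub_right, inner_add_left,
          inner_add_right, real_inner_smul_left, real_inner_smul_right, ipe] <;>
        simp +decide <;> field_simp <;>
        (first
          | linear_combination (t * w ^ 2 + w) * (hsw - hst)
          | linear_combination (t * w ^ 2 + w) * (hst - hsw)
          | linear_combination (t + t ^ 2 * w) * (hst - hsw)
          | linear_combination (t + t ^ 2 * w) * (hsw - hst)
          | ring)
  have hPlin : ∀ (a b : ℝ) (u v : EuclideanSpace ℝ (Fin 7)),
      P (a • u + b • v) = a • P u + b • P v := by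
    intro a b u v
    simp only [hP, map_add, map_smul, Submodule.coe_add, Submodule.coe_smul]
  intro X hX
  obtain ⟨a, b, hXab⟩ := Submodule.mem_span_pair.mp hX
  subst hXab
  have hPX : P (a • Z₃ + b • Z₄) =
      (a * ((t - w) / (w ^ 2 + 1))) • Z₄ + (b * ((w - t) / (t ^ 2 + 1))) • Z₃ := by
    rw [hPlin, hPZ3, hPZ4, smul_smul, smul_smul]
  refine ⟨?_, ?_⟩
  · rw [hPX]
    exact Submodule.add_mem _
      (Submodule.smul_mem _ _ (Submodule.subset_span (by simp)))
      (Submodule.smul_mem _ _ (Submodule.subset_span (by simp)))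
  · rw [hPX, hPlin, hPZ3, hPZ4, smul_smul, smul_smul, smul_add, smul_smul, smul_smul]
    match_scalars <;> field_simp <;> ring
end
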